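/- arXiv:2111.00388 — 2 statements merged into one kernel-verified Lean document; each statement's English description precedes it below -/
import Mathlib

section
/- Let R be a commutative ℚ-algebra and suppose y₁,…,y_n ∈ R are such that R is generated as a ℚ-algebra by y₁,…,y_n, and R is abstractly isomorphic as a ℚ-algebra to a polynomial ring in n variables. Then y₁,…,y_n are algebraically independent over ℚ, i.e., the ℚ-algebra homomorphism ℚ[X₁,…,X_n] → R sending X_i ↦ y_i is an isomorphism. -/
/-- A surjective ring endomorphism of a Noetherian commutative ring is injective. -/
lemma ringHom_injective_of_surjective_endo {A : Type*} [CommRing A] [IsNoetherianRing A]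
    (f : A →+* A) (hf : Function.Surjective f) : Function.Injective f := by
  have hiter : ∀ n : ℕ, Function.Surjective (f^[n]) := fun n =>
    Function.Surjective.iterate hf n
  have mono : Monotone fun n : ℕ => (RingHom.ker (f ^ n) : Ideal A) := by
    apply monotone_nat_of_le_succ
    intro n x hx
    simp only [RingHom.mem_ker, RingHom.coe_pow] at *
    rw [Function.iterate_succ', Function.comp_apply, hx, map_zero]
  obtain ⟨N, hN⟩ := monotone_stabilizes_iff_noetherian.2 (inferInstance : IsNoetherian A A)
    ⟨_, mono⟩
  rw [injective_iff_map_eq_zero]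
  intro a ha
  obtain ⟨b, rfl⟩ := hiter N a
  have hb : b ∈ RingHom.ker (f ^ (N + 1)) := by
    simp only [RingHom.mem_ker, RingHom.coe_pow, Function.iterate_succ', Function.comp_apply, ha]
  have hb' : b ∈ RingHom.ker (f ^ N) := by
    have h := hN (N + 1) (Nat.le_succ N)
    simp only [OrderHom.coe_mk] at h
    rw [h]; exact hb
  simpa only [RingHom.mem_ker, RingHom.coe_pow] using hb'

/-- If a commutative `ℚ`-algebra `R` is generated by `n` elements `y₁, …, y_n` and is
abstractly isomorphic (as a `ℚ`-algebra) to a polynomial ring in `n` variables, then the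
evaluation map `ℚ[X₁, …, X_n] → R`, `X_i ↦ y_i`, is an isomorphism; in particular the `y_i`
are algebraically independent over `ℚ`. -/
theorem stmt_2 (R : Type*) [CommRing R] [Algebra ℚ R] (n : ℕ) (y : Fin n → R)
    (hgen : Algebra.adjoin ℚ (Set.range y) = ⊤)
    (hiso : Nonempty (R ≃ₐ[ℚ] MvPolynomial (Fin n) ℚ)) :
    Function.Bijective (MvPolynomial.aeval (R := ℚ) y) ∧ AlgebraicIndependent ℚ y := by
  obtain ⟨e⟩ := hiso
  set φ := MvPolynomial.aeval (R := ℚ) y with hφ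
  have hsurj : Function.Surjective φ := by
    rw [← AlgHom.range_eq_top, ← Algebra.adjoin_range_eq_range_aeval]
    simpa using hgen
  have hg : Function.Surjective (e.toAlgHom.comp φ) :=
    e.surjective.comp hsurj
  have hginj : Function.Injective (e.toAlgHom.comp φ) :=
    ringHom_injective_of_surjective_endo (e.toAlgHom.comp φ).toRingHom hg
  have hinj : Function.Injective φ := by
    intro a b hab
    exact hginj (by simp [AlgHom.comp_apply, hab])
  exact ⟨⟨hinj, hsurj⟩, hinj⟩
end

section
/- In the setting of the previous statement, the isomorphism class of the cochain complex (C^*, d^*) is independent of the choice of sign assignment: if s and s' are two sign assignments on the edges of the n-cube with all square sign products equal to −1, then the resulting complexes are isomorphic as cochain complexes. -/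
namespace CubeComplexStmt5

/-- The Manhattan norm `|v|` of a vertex of the cube `{0,1}ⁿ`. -/
def deg {n : ℕ} (v : Fin n → Bool) : ℕ :=
  (Finset.univ.filter fun i => v i = true).card

lemma update_le {n : ℕ} (v : Fin n → Bool) (j : Fin n) :
    Function.update v j false ≤ v := by
  intro k
  by_cases hk : k = j <;> simp [hk, Function.update]

lemma deg_update {n : ℕ} {i : ℕ} (v : Fin n → Bool) (j : Fin n)
    (hv : v j = true) (hd : deg v = i + 1) : deg (Function.update v j false) = i := by
  have h : (Finset.univ.filter fun k => Function.update v j false k = true) =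
      (Finset.univ.filter fun k => v k = true).erase j := by
    ext k
    by_cases hk : k = j <;> simp [hk, Function.update, hv]
  have hj : j ∈ Finset.univ.filter fun k => v k = true := by simp [hv]
  simp only [deg, h, Finset.card_erase_of_mem hj]
  simp only [deg] at hd
  omega

lemma sign_comm (a b c d a' b' c' d' : ℤ)
    (hc : c * c = 1) (hd : d * d = 1) (hc' : c' * c' = 1) (hd' : d' * d' = 1)
    (h1 : a * b * (c * d) = -1) (h2 : a' * b' * (c' * d') = -1) :
    (a * a') * (b * b') = (c * c') * (d * d') := by
  have h3 : a * b = -(c * d) := by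
    linear_combination (c * d) * h1 - a * b * d ^ 2 * hc - a * b * hd
  have h4 : a' * b' = -(c' * d') := by
    linear_combination (c' * d') * h2 - a' * b' * d' ^ 2 * hc' - a' * b' * hd'
  linear_combination (a' * b') * h3 - (c * d) * h4

/-- A vertex sign `ε(v)`, defined by flipping off true coordinates starting with the
smallest. -/
def epsAux {n : ℕ} (t : (Fin n → Bool) → Fin n → ℤ) : ℕ → (Fin n → Bool) → ℤ
  | 0, _ => 1
  | (k+1), v =>
    if h : (Finset.univ.filter fun i => v i = true).Nonempty then
      t (Function.update v ((Finset.univ.filter fun i => v i = true).min' h) false)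
          ((Finset.univ.filter fun i => v i = true).min' h) *
        epsAux t k (Function.update v ((Finset.univ.filter fun i => v i = true).min' h) false)
    else 1

lemma epsAux_succ {n : ℕ} (t : (Fin n → Bool) → Fin n → ℤ) (k : ℕ) (v : Fin n → Bool)
    (h : (Finset.univ.filter fun i => v i = true).Nonempty) :
    epsAux t (k+1) v =
      t (Function.update v ((Finset.univ.filter fun i => v i = true).min' h) false)
          ((Finset.univ.filter fun i => v i = true).min' h) *
        epsAux t k
          (Function.update v ((Finset.univ.filter fun i => v i = true).min' h) false) := by
  rw [epsAux, dif_pos h]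

lemma epsAux_sq {n : ℕ} (t : (Fin n → Bool) → Fin n → ℤ)
    (ht : ∀ v j, t v j * t v j = 1) :
    ∀ k (v : Fin n → Bool), epsAux t k v * epsAux t k v = 1 := by
  intro k
  induction k with
  | zero => intro v; simp [epsAux]
  | succ k ih =>
    intro v
    by_cases h : (Finset.univ.filter fun i => v i = true).Nonempty
    · rw [epsAux_succ t k v h]
      have h1 := ht (Function.update v ((Finset.univ.filter fun i => v i = true).min' h) false)
        ((Finset.univ.filter fun i => v i = true).min' h)
      have h2 := ih (Function.update v ((Finset.univ.filter fun i => v i = true).min' h) false)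
      linear_combination
        (epsAux t k (Function.update v ((Finset.univ.filter fun i => v i = true).min' h) false) *
          epsAux t k (Function.update v ((Finset.univ.filter fun i => v i = true).min' h) false)) * h1 + h2
    · rw [epsAux, dif_neg h]; norm_num

lemma epsAux_flip {n : ℕ} (t : (Fin n → Bool) → Fin n → ℤ)
    (hcomm : ∀ (u : Fin n → Bool) (i j : Fin n), i ≠ j → u i = false → u j = false →
      t u i * t (Function.update u i true) j = t u j * t (Function.update u j true) i) :
    ∀ k (v : Fin n → Bool), deg v = k + 1 → ∀ j, v j = true →
      epsAux t (k+1) v =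
        t (Function.update v j false) j * epsAux t k (Function.update v j false) := by
  intro k
  induction k using Nat.strong_induction_on with
  | _ k IH =>
    intro v hv j hj
    have hS : (Finset.univ.filter fun i => v i = true).Nonempty :=
      ⟨j, by simp [hj]⟩
    set i := (Finset.univ.filter fun i => v i = true).min' hS with hidef
    have hi : v i = true := by
      have := (Finset.univ.filter fun i => v i = true).min'_mem hS
      simpa using this
    rw [epsAux_succ t k v hS, ← hidef]
    by_cases hij : i = j
    · rw [hij]
    · -- i ≠ j : use induction and the commutation relation
      have hcard : (Finset.univ.filter fun i => v i = true).card = k + 1 := hv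
      have h2 : 2 ≤ (Finset.univ.filter fun i => v i = true).card := by
        apply Finset.one_lt_card.2
        exact ⟨i, by simp [hi], j, by simp [hj], hij⟩
      obtain ⟨m, rfl⟩ : ∃ m, k = m + 1 := ⟨k - 1, by omega⟩
      set u : Fin n → Bool :=
        Function.update (Function.update v i false) j false with hu
      have hdi : deg (Function.update v i false) = m + 1 := deg_update v i hi hv
      have hdj : deg (Function.update v j false) = m + 1 := deg_update v j hj hv
      have hvij : (Function.update v i false) j = true := by
        rw [Function.update_of_ne (Ne.symm hij)]; exact hj
      have hvji : (Function.update v j false) i = true := by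
        rw [Function.update_of_ne (fun h => hij h)]; exact hi
      have huj : Function.update (Function.update v j false) i false = u := by
        rw [hu, Function.update_comm (fun h => hij h)]
      have e1 := IH m (Nat.lt_succ_self m) (Function.update v i false) hdi j hvij
      have e2 := IH m (Nat.lt_succ_self m) (Function.update v j false) hdj i hvji
      rw [huj] at e2
      have hu_eq : Function.update (Function.update v i false) j false = u := rfl
      rw [hu_eq] at e1
      rw [e1, e2]
      have hui : u i = false := by
        rw [hu, Function.update_of_ne (fun h => hij h), Function.update_self]
      have huj' : u j = false := by rw [hu, Function.update_self]
      have key1 : Function.update u i true = Function.update v j false := by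
        funext x
        by_cases h1 : x = i
        · subst h1
          rw [Function.update_self, Function.update_of_ne (fun h => hij h)]
          exact hi.symm
        · rw [Function.update_of_ne h1, hu]
          by_cases h2 : x = j
          · subst h2; rw [Function.update_self, Function.update_self]
          · rw [Function.update_of_ne h2, Function.update_of_ne h2,
              Function.update_of_ne h1]
      have key2 : Function.update u j true = Function.update v i false := by
        funext x
        by_cases h1 : x = j
        · subst h1
          rw [Function.update_self, Function.update_of_ne (Ne.symm hij)]
          exact hj.symm
        · rw [Function.update_of_ne h1, hu, Function.update_of_ne h1]
      have hc := hcomm u i j hij hui huj'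
      rw [key1, key2] at hc
      linear_combination (-(epsAux t m u)) * hc

variable {n : ℕ} (M : (Fin n → Bool) → Type) [∀ v, AddCommGroup (M v)]
  [∀ v, Module ℚ (M v)]

/-- The degree-`i` chain group of the cube complex: the direct sum (here: product, the index
set being finite) of the modules `F(v)` over the vertices `v` with `|v| = i`. -/
def Ch (i : ℕ) : Type :=
  ∀ v : {v : Fin n → Bool // deg v = i}, M v.1

instance (i : ℕ) : AddCommGroup (Ch M i) := by unfold Ch; infer_instance
instance (i : ℕ) : Module ℚ (Ch M i) := by unfold Ch; infer_instance

/-- The differential of the cube complex determined by a functor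
(`Fmap`, functorial data on the cube poset) and a sign assignment `s`:
`d x (w) = ∑_{edges v → w} s(e) · F(e)(x v)`. -/
noncomputable def dCube
    (Fmap : ∀ {v w : Fin n → Bool}, v ≤ w → (M v →ₗ[ℚ] M w))
    (s : (Fin n → Bool) → Fin n → ℤ) (i : ℕ) (x : Ch M i) : Ch M (i + 1) :=
  fun w => ∑ j : Fin n,
    if h : w.1 j = true then
      s (Function.update w.1 j false) j •
        Fmap (update_le w.1 j) (x ⟨Function.update w.1 j false, deg_update w.1 j h w.2⟩)
    else 0

/-- The isomorphism class of the cube complex is independent of the sign assignment: if `s`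
and `s'` are two sign assignments on the edges of the `n`-cube, each with all square sign
products equal to `−1`, then the resulting cochain complexes are isomorphic as cochain
complexes (there are `ℚ`-linear isomorphisms in each degree commuting with the
differentials). -/
theorem stmt_5
    (Fmap : ∀ {v w : Fin n → Bool}, v ≤ w → (M v →ₗ[ℚ] M w))
    (hId : ∀ v : Fin n → Bool, Fmap (le_refl v) = LinearMap.id)
    (hComp : ∀ {u v w : Fin n → Bool} (h₁ : u ≤ v) (h₂ : v ≤ w),
      (Fmap h₂).comp (Fmap h₁) = Fmap (h₁.trans h₂))
    (s s' : (Fin n → Bool) → Fin n → ℤ)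
    (hsign : ∀ v i, s v i = 1 ∨ s v i = -1)
    (hsign' : ∀ v i, s' v i = 1 ∨ s' v i = -1)
    (hsq : ∀ (v : Fin n → Bool) (i j : Fin n), i ≠ j → v i = false → v j = false →
      s v i * s (Function.update v i true) j *
        (s v j * s (Function.update v j true) i) = -1)
    (hsq' : ∀ (v : Fin n → Bool) (i j : Fin n), i ≠ j → v i = false → v j = false →
      s' v i * s' (Function.update v i true) j *
        (s' v j * s' (Function.update v j true) i) = -1) :
    ∃ e : ∀ i : ℕ, Ch M i ≃ₗ[ℚ] Ch M i,
      ∀ (i : ℕ) (x : Ch M i),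
        e (i + 1) (dCube M (fun h => Fmap h) s i x) =
          dCube M (fun h => Fmap h) s' i (e i x) := by
  classical
  set t : (Fin n → Bool) → Fin n → ℤ := fun v j => s v j * s' v j with ht_def
  have hssq : ∀ v j, s v j * s v j = 1 := by
    intro v j; rcases hsign v j with h | h <;> rw [h] <;> norm_num
  have hssq' : ∀ v j, s' v j * s' v j = 1 := by
    intro v j; rcases hsign' v j with h | h <;> rw [h] <;> norm_num
  have ht : ∀ v j, t v j * t v j = 1 := by
    intro v j
    have h1 := hssq v j
    have h2 := hssq' v j
    simp only [ht_def]
    linear_combination (s' v j * s' v j) * h1 + h2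
  have hcomm : ∀ (u : Fin n → Bool) (i j : Fin n), i ≠ j → u i = false → u j = false →
      t u i * t (Function.update u i true) j = t u j * t (Function.update u j true) i := by
    intro u i j hij hui huj
    simp only [ht_def]
    exact sign_comm _ _ _ _ _ _ _ _ (hssq u j) (hssq (Function.update u j true) i)
      (hssq' u j) (hssq' (Function.update u j true) i)
      (hsq u i j hij hui huj) (hsq' u i j hij hui huj)
  have hesq := epsAux_sq t ht
  -- the degree-wise linear map multiplying the component at `v` by `ε(v)`
  let f : ∀ i : ℕ, Ch M i →ₗ[ℚ] Ch M i := fun i =>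
    { toFun := fun x v => ((epsAux t i v.1 : ℤ) : ℚ) • x v
      map_add' := by
        intro x y
        funext v
        show ((epsAux t i v.1 : ℤ) : ℚ) • (x v + y v) = _
        rw [smul_add]
        rfl
      map_smul' := by
        intro q x
        funext v
        show ((epsAux t i v.1 : ℤ) : ℚ) • (q • x v) = q • (((epsAux t i v.1 : ℤ) : ℚ) • x v)
        rw [smul_smul, smul_smul, mul_comm] }
  have hff : ∀ (i : ℕ) (x : Ch M i), f i (f i x) = x := by
    intro i x
    funext v
    show ((epsAux t i v.1 : ℤ) : ℚ) • (((epsAux t i v.1 : ℤ) : ℚ) • x v) = x v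
    rw [smul_smul]
    have : ((epsAux t i v.1 : ℤ) : ℚ) * ((epsAux t i v.1 : ℤ) : ℚ) = 1 := by
      rw [← Int.cast_mul, hesq i v.1]; norm_num
    rw [this, one_smul]
  refine ⟨fun i => LinearEquiv.ofLinear (f i) (f i)
    (LinearMap.ext fun x => hff i x) (LinearMap.ext fun x => hff i x), ?_⟩
  intro i x
  show f (i + 1) (dCube M (fun h => Fmap h) s i x) = dCube M (fun h => Fmap h) s' i (f i x)
  funext w
  show ((epsAux t (i+1) w.1 : ℤ) : ℚ) • (dCube M (fun h => Fmap h) s i x w) = _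
  simp only [dCube]
  rw [Finset.smul_sum]
  apply Finset.sum_congr rfl
  intro j _
  by_cases h : w.1 j = true
  · rw [dif_pos h, dif_pos h]
    set v0 : {v : Fin n → Bool // deg v = i} :=
      ⟨Function.update w.1 j false, deg_update w.1 j h w.2⟩ with hv0
    show ((epsAux t (i+1) w.1 : ℤ) : ℚ) •
        (s (Function.update w.1 j false) j • Fmap (update_le w.1 j) (x v0)) =
      s' (Function.update w.1 j false) j •
        Fmap (update_le w.1 j) (((epsAux t i v0.1 : ℤ) : ℚ) • x v0)
    rw [map_smul]
    rw [← Int.cast_smul_eq_zsmul ℚ (s (Function.update w.1 j false) j),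
      ← Int.cast_smul_eq_zsmul ℚ (s' (Function.update w.1 j false) j)]
    rw [smul_smul, smul_smul]
    congr 1
    rw [← Int.cast_mul, ← Int.cast_mul]
    congr 1
    -- ε(w) * s(e) = s'(e) * ε(v₀)
    have hflip := epsAux_flip t hcomm i w.1 w.2 j h
    have ha := hssq (Function.update w.1 j false) j
    simp only [ht_def] at hflip
    rw [hflip]
    show s (Function.update w.1 j false) j * s' (Function.update w.1 j false) j *
        epsAux t i (Function.update w.1 j false) * s (Function.update w.1 j false) j =
      s' (Function.update w.1 j false) j * epsAux t i (Function.update w.1 j false)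
    linear_combination (s' (Function.update w.1 j false) j *
      epsAux t i (Function.update w.1 j false)) * ha
  · rw [dif_neg h, dif_neg h, smul_zero]

end CubeComplexStmt5
end
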